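/- Let 1 ≤ r, s < ∞ and β, γ ∈ ℝ. (1) If r ≤ s, then ℓ^r_β(ℤ) ⊆ ℓ^s_γ(ℤ) if and only if γ ≤ β. (2) If r > s, then ℓ^r_β(ℤ) ⊆ ℓ^s_γ(ℤ) if and only if β − γ > 1/s − 1/r. -/

import Mathlib

open MeasureTheory Real Set Filter Topology ENNReal

noncomputable section

/-- Membership in `ℓ^p_β(ℤ)`: `∑_{n∈ℤ} |u_n|^p (1+|n|)^{pβ} < ∞`. -/
def MemL (p β : ℝ) (u : ℤ → ℂ) : Prop :=
  Summable fun n : ℤ => ‖u n‖ ^ p * (1 + |(n : ℝ)|) ^ (p * β)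

namespace Stmt19Aux

lemma natAbs_summable_iff {F : ℕ → ℝ} :
    (Summable fun n : ℤ => F n.natAbs) ↔ Summable F := by
  constructor
  · intro h
    have h2 := h.comp_injective (Nat.cast_injective)
    exact h2.congr fun n => by simp [Function.comp]
  · intro h
    refine Summable.of_nat_of_neg (h.congr fun n => ?_) (h.congr fun n => ?_) <;> simp

lemma summable_nat_weight {c : ℝ} (hc : c < -1) :
    Summable fun k : ℕ => (1 + (k : ℝ)) ^ c := by
  have h0 : Summable fun k : ℕ => (k : ℝ) ^ c := Real.summable_nat_rpow.mpr hc
  have h1 := (summable_nat_add_iff 1).mpr h0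
  refine h1.congr fun k => ?_
  push_cast
  rw [add_comm]

lemma summable_int_weight {c : ℝ} (hc : c < -1) :
    Summable fun n : ℤ => (1 + |(n : ℝ)|) ^ c := by
  have h := natAbs_summable_iff.mpr (summable_nat_weight hc)
  refine h.congr fun n => ?_
  rw [Nat.cast_natAbs, Int.cast_abs]

lemma log_aux_pos (k : ℕ) : 0 < Real.log (2 + (k : ℝ)) := by
  apply Real.log_pos
  have : (0:ℝ) ≤ k := Nat.cast_nonneg k
  linarith

lemma aux_anti {e b : ℝ} (he : e ≤ 0) (hb : b ≤ 0) : ∀ ⦃m n : ℕ⦄, 0 < m → m ≤ n →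
    (1 + (n:ℝ)) ^ e * Real.log (2 + (n:ℝ)) ^ b
      ≤ (1 + (m:ℝ)) ^ e * Real.log (2 + (m:ℝ)) ^ b := by
  intro m n _ hmn
  have hmn' : (m:ℝ) ≤ n := Nat.cast_le.mpr hmn
  have h1 : (1 + (n:ℝ)) ^ e ≤ (1 + (m:ℝ)) ^ e :=
    Real.rpow_le_rpow_of_nonpos (by positivity) (by linarith) he
  have h2 : Real.log (2 + (n:ℝ)) ^ b ≤ Real.log (2 + (m:ℝ)) ^ b := by
    refine Real.rpow_le_rpow_of_nonpos (log_aux_pos m) ?_ hb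
    exact Real.log_le_log (by positivity) (by linarith)
  exact mul_le_mul h1 h2 (Real.rpow_nonneg (log_aux_pos n).le _) (Real.rpow_nonneg (by positivity) _)

lemma summable_log_conv {a : ℝ} (ha : 1 < a) :
    Summable fun k : ℕ => (1 + (k : ℝ)) ^ (-1 : ℝ) * Real.log (2 + (k : ℝ)) ^ (-a) := by
  have h_nonneg : ∀ k : ℕ, 0 ≤ (1 + (k : ℝ)) ^ (-1 : ℝ) * Real.log (2 + (k : ℝ)) ^ (-a) :=
    fun k => mul_nonneg (Real.rpow_nonneg (by positivity) _) (Real.rpow_nonneg (log_aux_pos k).le _)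
  refine (summable_condensed_iff_of_nonneg h_nonneg
    (aux_anti (by norm_num) (by linarith))).mp ?_
  refine (summable_nat_add_iff 1).mp ?_
  have key : Summable fun n : ℕ => Real.log 2 ^ (-a) * (((n:ℝ)+1) ^ (-a)) := by
    have h0 : Summable fun n : ℕ => ((n:ℝ)+1) ^ (-a) := by
      have h1 := (summable_nat_add_iff 1).mpr (Real.summable_nat_rpow.mpr (by linarith : -a < -1))
      refine h1.congr fun n => ?_
      push_cast
      ring_nf
    exact h0.mul_left _
  refine Summable.of_nonneg_of_le (fun n => ?_) (fun n => ?_) key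
  · exact mul_nonneg (by positivity) (h_nonneg _)
  · have h2 : (0:ℝ) < 2 ^ (n+1) := by positivity
    have hlog2 : (0:ℝ) < Real.log 2 := Real.log_pos one_lt_two
    have hcast : ((2 ^ (n+1) : ℕ) : ℝ) = 2 ^ (n+1) := by push_cast; ring
    rw [hcast]
    have hb1 : (2:ℝ) ^ (n+1) * (1 + (2:ℝ) ^ (n+1)) ^ (-1:ℝ) ≤ 1 := by
      rw [Real.rpow_neg_one]
      rw [mul_inv_le_iff₀ (by positivity), one_mul]
      linarith
    have hb2 : Real.log (2 + (2:ℝ)^(n+1)) ^ (-a) ≤ (((n:ℝ)+1) * Real.log 2) ^ (-a) := by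
      refine Real.rpow_le_rpow_of_nonpos (by positivity) ?_ (by linarith)
      have heq : ((n:ℝ)+1) * Real.log 2 = Real.log ((2:ℝ) ^ (n+1)) := by
        rw [Real.log_pow]
        push_cast
        ring
      rw [heq]
      exact Real.log_le_log (by positivity) (by linarith)
    calc (2:ℝ) ^ (n+1) * ((1 + (2:ℝ) ^ (n+1)) ^ (-1:ℝ) * Real.log (2 + (2:ℝ)^(n+1)) ^ (-a))
        = ((2:ℝ) ^ (n+1) * (1 + (2:ℝ) ^ (n+1)) ^ (-1:ℝ)) * Real.log (2 + (2:ℝ)^(n+1)) ^ (-a) := by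
          ring
      _ ≤ 1 * (((n:ℝ)+1) * Real.log 2) ^ (-a) := by
          refine mul_le_mul hb1 hb2 (Real.rpow_nonneg ?_ _) (by norm_num)
          have := log_aux_pos (2 ^ (n+1))
          rw [hcast] at this
          exact this.le
      _ = Real.log 2 ^ (-a) * (((n:ℝ)+1) ^ (-a)) := by
          rw [one_mul, Real.mul_rpow (by positivity) hlog2.le]
          ring

lemma not_summable_log_div {e : ℝ} (he : -1 ≤ e) :
    ¬ Summable fun k : ℕ => (1 + (k : ℝ)) ^ e * Real.log (2 + (k : ℝ)) ^ (-1 : ℝ) := by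
  intro h
  have h0 : Summable fun k : ℕ => (1 + (k : ℝ)) ^ (-1:ℝ) * Real.log (2 + (k : ℝ)) ^ (-1 : ℝ) := by
    refine Summable.of_nonneg_of_le (fun k => ?_) (fun k => ?_) h
    · exact mul_nonneg (Real.rpow_nonneg (by positivity) _)
        (Real.rpow_nonneg (log_aux_pos k).le _)
    · refine mul_le_mul_of_nonneg_right ?_ (Real.rpow_nonneg (log_aux_pos k).le _)
      have hk1 : (1:ℝ) ≤ 1 + (k:ℝ) := by
        have := Nat.cast_nonneg (α := ℝ) k
        linarith
      exact Real.rpow_le_rpow_of_exponent_le hk1 he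
  have h_nonneg : ∀ k : ℕ, 0 ≤ (1 + (k : ℝ)) ^ (-1:ℝ) * Real.log (2 + (k : ℝ)) ^ (-1 : ℝ) :=
    fun k => mul_nonneg (Real.rpow_nonneg (by positivity) _) (Real.rpow_nonneg (log_aux_pos k).le _)
  have h1 := (summable_condensed_iff_of_nonneg h_nonneg
    (aux_anti (by norm_num) (by norm_num))).mpr h0
  have hlog2 : (0:ℝ) < Real.log 2 := Real.log_pos one_lt_two
  have h2 : Summable fun k : ℕ => (1/2) * (((k:ℝ)+2) * Real.log 2)⁻¹ := by
    refine Summable.of_nonneg_of_le (fun k => by positivity) (fun k => ?_) h1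
    have h2k : (0:ℝ) < 2 ^ k := by positivity
    have h2k1 : (1:ℝ) ≤ 2 ^ k := one_le_pow₀ (by norm_num)
    have hcast : ((2 ^ k : ℕ) : ℝ) = 2 ^ k := by push_cast; ring
    rw [hcast]
    have hb1 : (1/2 : ℝ) ≤ (2:ℝ) ^ k * (1 + (2:ℝ) ^ k) ^ (-1:ℝ) := by
      rw [Real.rpow_neg_one, ← div_eq_mul_inv, le_div_iff₀ (by positivity)]
      nlinarith
    have hb2 : (((k:ℝ)+2) * Real.log 2)⁻¹ ≤ Real.log (2 + (2:ℝ)^k) ^ (-1:ℝ) := by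
      rw [Real.rpow_neg_one]
      have hlogpos : 0 < Real.log (2 + (2:ℝ)^k) := by
        have := log_aux_pos (2^k)
        rwa [hcast] at this
      refine inv_anti₀ hlogpos ?_
      have heq : ((k:ℝ)+2) * Real.log 2 = Real.log ((2:ℝ) ^ (k+2)) := by
        rw [Real.log_pow]; push_cast; ring
      rw [heq]
      refine Real.log_le_log (by positivity) ?_
      have : (2:ℝ) ^ (k+2) = 4 * 2 ^ k := by ring
      rw [this]
      nlinarith
    calc (1/2 : ℝ) * (((k:ℝ)+2) * Real.log 2)⁻¹
        ≤ ((2:ℝ) ^ k * (1 + (2:ℝ) ^ k) ^ (-1:ℝ)) * Real.log (2 + (2:ℝ)^k) ^ (-1:ℝ) := by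
          refine mul_le_mul hb1 hb2 (by positivity) ?_
          positivity
      _ = (2:ℝ) ^ k * ((1 + (2:ℝ) ^ k) ^ (-1:ℝ) * Real.log (2 + (2:ℝ)^k) ^ (-1:ℝ)) := by ring
  have h3 : Summable fun k : ℕ => ((k:ℝ)+2)⁻¹ := by
    have h4 := h2.mul_left (2 * Real.log 2)
    refine h4.congr fun k => ?_
    have : ((k:ℝ)+2) ≠ 0 := by positivity
    field_simp
  have h5 : Summable fun k : ℕ => (k:ℝ)⁻¹ := by
    refine (summable_nat_add_iff 2).mp ?_
    refine h3.congr fun k => ?_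
    push_cast
    ring
  exact Real.not_summable_natCast_inv h5

lemma incl1 {r s β γ : ℝ} (hr : 1 ≤ r) (hrs : r ≤ s) (hgb : γ ≤ β)
    (u : ℤ → ℂ) (hu : MemL r β u) : MemL s γ u := by
  have hr0 : (0:ℝ) < r := by linarith
  have hs0 : (0:ℝ) < s := by linarith
  unfold MemL at hu ⊢
  set t : ℤ → ℝ := fun n => ‖u n‖ ^ r * (1 + |(n:ℝ)|) ^ (r * β) with ht
  have ht_nonneg : ∀ n, 0 ≤ t n := fun n => by positivity
  set C : ℝ := ∑' n, t n with hC
  have hle : ∀ n, t n ≤ C := fun n => Summable.le_tsum hu n fun j _ => ht_nonneg j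
  have hC0 : 0 ≤ C := (ht_nonneg 0).trans (hle 0)
  set K : ℝ := (C ^ (1/r)) ^ (s - r) with hK
  have hK0 : 0 ≤ K := Real.rpow_nonneg (Real.rpow_nonneg hC0 _) _
  refine Summable.of_nonneg_of_le (fun n => by positivity) (fun n => ?_) (hu.mul_left K)
  have hw : (0:ℝ) < 1 + |(n:ℝ)| := by positivity
  have hw1 : (1:ℝ) ≤ 1 + |(n:ℝ)| := by
    have := abs_nonneg ((n:ℝ)); linarith
  set v : ℝ := ‖u n‖ * (1 + |(n:ℝ)|) ^ β with hv
  have hv0 : 0 ≤ v := mul_nonneg (norm_nonneg _) (Real.rpow_nonneg hw.le _)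
  have htv : t n = v ^ r := by
    rw [hv, Real.mul_rpow (norm_nonneg _) (Real.rpow_nonneg hw.le _),
      ← Real.rpow_mul hw.le, mul_comm β r]
  have hvs : v ^ s = ‖u n‖ ^ s * (1 + |(n:ℝ)|) ^ (s * β) := by
    rw [hv, Real.mul_rpow (norm_nonneg _) (Real.rpow_nonneg hw.le _),
      ← Real.rpow_mul hw.le, mul_comm β s]
  have step1 : ‖u n‖ ^ s * (1 + |(n:ℝ)|) ^ (s * γ) ≤ v ^ s := by
    rw [hvs]
    refine mul_le_mul_of_nonneg_left ?_ (Real.rpow_nonneg (norm_nonneg _) _)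
    exact Real.rpow_le_rpow_of_exponent_le hw1 (by nlinarith)
  have hvC : v ≤ C ^ (1/r) := by
    have h1 : (v ^ r) ^ (1/r) ≤ C ^ (1/r) :=
      Real.rpow_le_rpow (Real.rpow_nonneg hv0 _) (htv ▸ hle n) (by positivity)
    rwa [← Real.rpow_mul hv0, mul_one_div, div_self hr0.ne', Real.rpow_one] at h1
  have step2 : v ^ s ≤ K * t n := by
    have hsplit : v ^ s = v ^ (s - r) * v ^ r := by
      rw [← Real.rpow_add' hv0 (by linarith)]
      ring_nf
    rw [hsplit, htv]
    refine mul_le_mul_of_nonneg_right ?_ (Real.rpow_nonneg hv0 _)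
    exact Real.rpow_le_rpow hv0 hvC (by linarith)
  exact step1.trans step2

lemma incl2 {r s β γ : ℝ} (hs : 1 ≤ s) (hsr : s < r) (hgap : 1/s - 1/r < β - γ)
    (u : ℤ → ℂ) (hu : MemL r β u) : MemL s γ u := by
  have hs0 : (0:ℝ) < s := by linarith
  have hr0 : (0:ℝ) < r := by linarith
  have hrs0 : (0:ℝ) < r - s := by linarith
  have hpq : (r/s).HolderConjugate (r/(r-s)) := by
    rw [Real.holderConjugate_iff]
    constructor
    · rw [lt_div_iff₀ hs0]; linarith
    · rw [inv_div, inv_div, ← add_div]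
      field_simp
      ring
  have hc : (s*γ - s*β) * (r/(r-s)) < -1 := by
    have key : r - s < s * r * (β - γ) := by
      have h1 := mul_lt_mul_of_pos_left hgap (by positivity : (0:ℝ) < s * r)
      have h2 : s * r * (1/s - 1/r) = r - s := by field_simp
      linarith [h2 ▸ h1]
    rw [show (s*γ - s*β) * (r/(r-s)) = ((s*γ - s*β) * r)/(r-s) by ring,
      div_lt_iff₀ hrs0]
    nlinarith
  have hwsum : Summable fun n : ℤ => (1 + |(n:ℝ)|) ^ ((s*γ - s*β) * (r/(r-s))) :=
    summable_int_weight hc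
  unfold MemL at hu ⊢
  refine Summable.of_nonneg_of_le (fun n => by positivity) (fun n => ?_)
    ((hu.div_const (r/s)).add (hwsum.div_const (r/(r-s))))
  have hw : (0:ℝ) < 1 + |(n:ℝ)| := by positivity
  have hA : (0:ℝ) ≤ ‖u n‖ ^ s * (1 + |(n:ℝ)|) ^ (s*β) := by positivity
  have hB : (0:ℝ) ≤ (1 + |(n:ℝ)|) ^ (s*γ - s*β) := by positivity
  have hy := Real.young_inequality_of_nonneg hA hB hpq
  have hAB : ‖u n‖ ^ s * (1 + |(n:ℝ)|) ^ (s * γ)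
      = (‖u n‖ ^ s * (1 + |(n:ℝ)|) ^ (s*β)) * (1 + |(n:ℝ)|) ^ (s*γ - s*β) := by
    rw [mul_assoc, ← Real.rpow_add hw]
    ring_nf
  have hAp : (‖u n‖ ^ s * (1 + |(n:ℝ)|) ^ (s*β)) ^ (r/s)
      = ‖u n‖ ^ r * (1 + |(n:ℝ)|) ^ (r * β) := by
    rw [Real.mul_rpow (Real.rpow_nonneg (norm_nonneg _) _) (Real.rpow_nonneg hw.le _),
      ← Real.rpow_mul (norm_nonneg _), ← Real.rpow_mul hw.le,
      show s * (r/s) = r by field_simp, show s*β * (r/s) = r * β by field_simp]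
  have hBq : ((1 + |(n:ℝ)|) ^ (s*γ - s*β)) ^ (r/(r-s))
      = (1 + |(n:ℝ)|) ^ ((s*γ - s*β) * (r/(r-s))) := by
    rw [← Real.rpow_mul hw.le]
  rw [hAB]
  calc (‖u n‖ ^ s * (1 + |(n:ℝ)|) ^ (s*β)) * (1 + |(n:ℝ)|) ^ (s*γ - s*β)
      ≤ (‖u n‖ ^ s * (1 + |(n:ℝ)|) ^ (s*β)) ^ (r/s) / (r/s)
        + ((1 + |(n:ℝ)|) ^ (s*γ - s*β)) ^ (r/(r-s)) / (r/(r-s)) := hy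
    _ = ‖u n‖ ^ r * (1 + |(n:ℝ)|) ^ (r * β) / (r/s)
        + (1 + |(n:ℝ)|) ^ ((s*γ - s*β) * (r/(r-s))) / (r/(r-s)) := by rw [hAp, hBq]

lemma CE1 {r s β γ : ℝ} (hr : 1 ≤ r) (hs : 1 ≤ s) (h : β < γ) :
    ∃ u : ℤ → ℂ, MemL r β u ∧ ¬ MemL s γ u := by
  have hr0 : (0:ℝ) < r := by linarith
  have hs0 : (0:ℝ) < s := by linarith
  set g : ℕ → ℤ := fun k => 2 ^ k with hg
  have hginj : Function.Injective g := by
    intro a b hab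
    have hab0 : (2:ℤ) ^ a = 2 ^ b := hab
    have hab' : (2:ℕ) ^ a = 2 ^ b := by exact_mod_cast hab0
    exact Nat.pow_right_injective le_rfl hab'
  set a : ℕ → ℂ := fun k => (((1 + (2:ℝ)^k) ^ (-γ) : ℝ) : ℂ) with ha
  set u : ℤ → ℂ := Function.extend g a (fun _ => 0) with hu
  have hval : ∀ k, u (g k) = a k := fun k => hginj.extend_apply _ _ _
  have hoff : ∀ n ∉ Set.range g, u n = 0 := by
    intro n hn
    have : ¬ ∃ k, g k = n := by simpa [Set.range] using hn
    simpa using Function.extend_apply' a (fun _ => 0) n this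
  have key : ∀ (p θ : ℝ) (k : ℕ), ‖u (g k)‖ ^ p * (1 + |((g k : ℤ) : ℝ)|) ^ (p * θ)
      = (1 + (2:ℝ)^k) ^ ((-γ) * p + p * θ) := by
    intro p θ k
    have h2k : (0:ℝ) < 2 ^ k := by positivity
    have hw : (0:ℝ) < 1 + 2 ^ k := by positivity
    have habs : |((g k : ℤ) : ℝ)| = (2:ℝ) ^ k := by
      rw [hg]
      push_cast
      exact abs_of_nonneg h2k.le
    have hnorm : ‖u (g k)‖ = (1 + (2:ℝ)^k) ^ (-γ) := by
      rw [hval k, ha]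
      simp only [Complex.norm_real]
      exact abs_of_nonneg (Real.rpow_nonneg hw.le _)
    rw [habs, hnorm, ← Real.rpow_mul hw.le, ← Real.rpow_add hw]
  have hvan : ∀ (p θ : ℝ), 1 ≤ p → ∀ n ∉ Set.range g,
      ‖u n‖ ^ p * (1 + |(n : ℝ)|) ^ (p * θ) = 0 := by
    intro p θ hp n hn
    rw [hoff n hn]
    simp only [norm_zero]
    rw [Real.zero_rpow (by linarith : p ≠ 0), zero_mul]
  refine ⟨u, ?_, ?_⟩
  · show Summable fun n : ℤ => ‖u n‖ ^ r * (1 + |(n : ℝ)|) ^ (r * β)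
    refine (hginj.summable_iff (hvan r β hr)).mp ?_
    have hc : (-γ) * r + r * β < 0 := by nlinarith
    have hgeo : Summable fun k : ℕ => ((2:ℝ) ^ ((-γ) * r + r * β)) ^ k :=
      summable_geometric_of_lt_one (Real.rpow_nonneg (by norm_num) _)
        (Real.rpow_lt_one_of_one_lt_of_neg one_lt_two hc)
    have h1 : Summable fun k : ℕ => (1 + (2:ℝ)^k) ^ ((-γ) * r + r * β) := by
      refine Summable.of_nonneg_of_le (fun k => by positivity) (fun k => ?_) hgeo
      have h2k : (0:ℝ) < 2 ^ k := by positivity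
      calc (1 + (2:ℝ)^k) ^ ((-γ) * r + r * β) ≤ ((2:ℝ)^k) ^ ((-γ) * r + r * β) :=
            Real.rpow_le_rpow_of_nonpos h2k (by linarith) hc.le
        _ = ((2:ℝ) ^ ((-γ) * r + r * β)) ^ k := by
            rw [← Real.rpow_natCast (2:ℝ) k, ← Real.rpow_mul (by norm_num), mul_comm,
              Real.rpow_mul (by norm_num), Real.rpow_natCast]
    exact h1.congr fun k => (key r β k).symm
  · intro hsum
    have hsum' : Summable fun n : ℤ => ‖u n‖ ^ s * (1 + |(n : ℝ)|) ^ (s * γ) := hsum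
    have h2 := (hginj.summable_iff (hvan s γ hs)).mpr hsum'
    have h3 : Summable fun _ : ℕ => (1:ℝ) := by
      refine h2.congr fun k => ?_
      show ‖u (g k)‖ ^ s * (1 + |((g k : ℤ) : ℝ)|) ^ (s * γ) = 1
      rw [key s γ k, show (-γ) * s + s * γ = 0 by ring, Real.rpow_zero]
    exact one_ne_zero ((summable_const_iff (1:ℝ)).mp h3)

lemma CE2 {r s β γ : ℝ} (hr : 1 ≤ r) (hs : 1 ≤ s) (hsr : s < r) (h : β - γ ≤ 1/s - 1/r) :
    ∃ u : ℤ → ℂ, MemL r β u ∧ ¬ MemL s γ u := by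
  have hr0 : (0:ℝ) < r := by linarith
  have hs0 : (0:ℝ) < s := by linarith
  set w : ℕ → ℝ := fun k => (1 + (k:ℝ)) ^ (-β - 1/r) * Real.log (2 + (k:ℝ)) ^ (-(1/s)) with hw
  have hwpos : ∀ k, 0 < w k := fun k =>
    mul_pos (Real.rpow_pos_of_pos (by positivity) _) (Real.rpow_pos_of_pos (log_aux_pos k) _)
  set u : ℤ → ℂ := fun n => ((w n.natAbs : ℝ) : ℂ) with hu
  have hkey : ∀ (p θ : ℝ) (n : ℤ), ‖u n‖ ^ p * (1 + |(n:ℝ)|) ^ (p*θ)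
      = (1 + (n.natAbs:ℝ)) ^ ((-β-1/r)*p + p*θ)
        * Real.log (2 + (n.natAbs:ℝ)) ^ (-(1/s)*p) := by
    intro p θ n
    have h1 : (0:ℝ) < 1 + (n.natAbs:ℝ) := by positivity
    have habs : |(n:ℝ)| = (n.natAbs : ℝ) := by
      rw [Nat.cast_natAbs, Int.cast_abs]
    have hnorm : ‖u n‖ = w n.natAbs := by
      rw [hu]
      simp only [Complex.norm_real]
      exact abs_of_pos (hwpos _)
    rw [habs, hnorm, hw]
    simp only
    rw [Real.mul_rpow (Real.rpow_nonneg h1.le _) (Real.rpow_nonneg (log_aux_pos _).le _),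
      ← Real.rpow_mul h1.le, ← Real.rpow_mul (log_aux_pos _).le,
      mul_right_comm, ← Real.rpow_add h1]
  refine ⟨u, ?_, ?_⟩
  · show Summable fun n : ℤ => ‖u n‖ ^ r * (1 + |(n : ℝ)|) ^ (r * β)
    have e1 : (-β-1/r)*r + r*β = -1 := by field_simp; ring
    have e2 : -(1/s)*r = -(r/s) := by ring
    have hF : Summable fun k : ℕ => (1 + (k:ℝ)) ^ (-1:ℝ) * Real.log (2+(k:ℝ)) ^ (-(r/s)) :=
      summable_log_conv (by rw [lt_div_iff₀ hs0]; linarith)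
    refine (natAbs_summable_iff.mpr hF).congr fun n => ?_
    rw [hkey r β n, e1, e2]
  · intro hsum
    have hsum' : Summable fun n : ℤ => ‖u n‖ ^ s * (1 + |(n : ℝ)|) ^ (s * γ) := hsum
    have e2 : -(1/s)*s = -1 := by rw [neg_mul, one_div_mul_cancel hs0.ne']
    have he : -1 ≤ (-β-1/r)*s + s*γ := by
      have h1 : s * (β - γ) ≤ s * (1/s - 1/r) := mul_le_mul_of_nonneg_left h hs0.le
      have h2 : s * (1/s - 1/r) = 1 - s * (1/r) := by
        rw [mul_sub, mul_one_div, div_self hs0.ne', mul_one_div]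
      nlinarith
    have hG : Summable fun k : ℕ =>
        (1+(k:ℝ)) ^ ((-β-1/r)*s + s*γ) * Real.log (2+(k:ℝ)) ^ (-1:ℝ) := by
      refine natAbs_summable_iff.mp (hsum'.congr fun n => ?_)
      rw [hkey s γ n, e2]
    exact not_summable_log_div he hG


end Stmt19Aux

theorem stmt19 (r s β γ : ℝ) (hr : 1 ≤ r) (hs : 1 ≤ s) :
    (r ≤ s →
      ((∀ u : ℤ → ℂ, MemL r β u → MemL s γ u) ↔ γ ≤ β)) ∧
    (s < r →
      ((∀ u : ℤ → ℂ, MemL r β u → MemL s γ u) ↔ 1 / s - 1 / r < β - γ)) := by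
  constructor
  · intro hrs
    constructor
    · intro H
      by_contra hcon
      push_neg at hcon
      obtain ⟨u, hu, hnot⟩ := Stmt19Aux.CE1 hr hs hcon (r := r) (s := s)
      exact hnot (H u hu)
    · intro hgb u hu
      exact Stmt19Aux.incl1 hr hrs hgb u hu
  · intro hsr
    constructor
    · intro H
      by_contra hcon
      push_neg at hcon
      obtain ⟨u, hu, hnot⟩ := Stmt19Aux.CE2 hr hs hsr hcon
      exact hnot (H u hu)
    · intro hgap u hu
      exact Stmt19Aux.incl2 hs hsr hgap u hu

end
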